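/- Suppose either L=1, or 2 ≤ L ≤ K-1 and θ (restricted to sets of size L) satisfies F4_θ(L). Let μ ∈ ℝ^K, and extend θ to sets A with |A| = L+1 by θ(A) = min over i ∈ A of (θ(A−i) + μ(i)). Then the extended θ satisfies S3_θ(L+1): for every bundle A with |A| = L-1 and distinct goods i,j,k ∉ A, the triple (θ(Aij)+θ(Ak), θ(Aik)+θ(Aj), θ(Ajk)+θ(Ai)) has the double minimum property. -/
import Mathlib


def DoubleMin (x y z : ℝ) : Prop :=
  (x = min x (min y z) ∧ y = min x (min y z)) ∨
  (x = min x (min y z) ∧ z = min x (min y z)) ∨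
  (y = min x (min y z) ∧ z = min x (min y z))

lemma dm_of (x y z : ℝ) (h1 : y ≤ x ∨ z ≤ x) (h2 : x ≤ y ∨ z ≤ y)
    (h3 : x ≤ z ∨ y ≤ z) : DoubleMin x y z := by
  unfold DoubleMin
  rcases min_cases y z with ⟨e, le⟩ | ⟨e, le⟩ <;>
  rcases min_cases x (min y z) with ⟨e2, le2⟩ | ⟨e2, le2⟩ <;>
  rcases h1 with h1 | h1 <;> rcases h2 with h2 | h2 <;> rcases h3 with h3 | h3 <;>
    first
      | exact Or.inl ⟨by linarith, by linarith⟩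
      | exact Or.inr (Or.inl ⟨by linarith, by linarith⟩)
      | exact Or.inr (Or.inr ⟨by linarith, by linarith⟩)

lemma key_lemma {K L : ℕ}
    (θ : Finset (Fin K) → ℝ) (μ : Fin K → ℝ)
    (hyp : L = 1 ∨ (2 ≤ L ∧ L ≤ K - 1 ∧
      ∀ (A : Finset (Fin K)) (i j k l : Fin K), A.card = L - 2 →
        i ∉ A → j ∉ A → k ∉ A → l ∉ A →
        i ≠ j → i ≠ k → i ≠ l → j ≠ k → j ≠ l → k ≠ l →
        DoubleMin (θ (insert i (insert j A)) + θ (insert k (insert l A)))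
                  (θ (insert i (insert k A)) + θ (insert j (insert l A)))
                  (θ (insert i (insert l A)) + θ (insert j (insert k A)))))
    (hext_le : ∀ A : Finset (Fin K), A.card = L + 1 → ∀ i ∈ A, θ A ≤ θ (A.erase i) + μ i)
    (hext_eq : ∀ A : Finset (Fin K), A.card = L + 1 → ∃ i ∈ A, θ A = θ (A.erase i) + μ i)
    (A : Finset (Fin K)) (i j k : Fin K) (hA : A.card = L - 1)
    (hi : i ∉ A) (hj : j ∉ A) (hk : k ∉ A)
    (hij : i ≠ j) (hik : i ≠ k) (hjk : j ≠ k) :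
    θ (insert i (insert k A)) + θ (insert j A) ≤ θ (insert i (insert j A)) + θ (insert k A) ∨
    θ (insert j (insert k A)) + θ (insert i A) ≤ θ (insert i (insert j A)) + θ (insert k A) := by
  have hL1 : 1 ≤ L := by rcases hyp with h | ⟨h, _⟩ <;> omega
  have hiJ : i ∉ insert j A := by simp [Finset.mem_insert, hij, hi]
  have hiK : i ∉ insert k A := by simp [Finset.mem_insert, hik, hi]
  have hjK : j ∉ insert k A := by simp [Finset.mem_insert, hjk, hj]
  have cij : (insert i (insert j A)).card = L + 1 := by
    rw [Finset.card_insert_of_notMem hiJ, Finset.card_insert_of_notMem hj, hA]; omega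
  have cik : (insert i (insert k A)).card = L + 1 := by
    rw [Finset.card_insert_of_notMem hiK, Finset.card_insert_of_notMem hk, hA]; omega
  have cjk : (insert j (insert k A)).card = L + 1 := by
    rw [Finset.card_insert_of_notMem hjK, Finset.card_insert_of_notMem hk, hA]; omega
  obtain ⟨m, hm, heq⟩ := hext_eq _ cij
  rcases Finset.mem_insert.mp hm with rfl | hm'
  · -- m = i
    rw [Finset.erase_insert hiJ] at heq
    have h2 := hext_le _ cik m (Finset.mem_insert_self m _)
    rw [Finset.erase_insert hiK] at h2
    left; linarith
  rcases Finset.mem_insert.mp hm' with rfl | hmA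
  · -- m = j
    have e1 : (insert i (insert m A)).erase m = insert i A := by
      rw [Finset.erase_insert_of_ne hij, Finset.erase_insert hj]
    rw [e1] at heq
    have h3 := hext_le _ cjk m (Finset.mem_insert_self m _)
    rw [Finset.erase_insert hjK] at h3
    right; linarith
  · -- m ∈ A
    have hL2 : 2 ≤ L := by
      rcases hyp with h | ⟨h, _⟩
      · exfalso
        have : 0 < A.card := Finset.card_pos.mpr ⟨m, hmA⟩
        omega
      · exact h
    obtain ⟨-, -, F4⟩ := hyp.resolve_left (by omega)
    have him : i ≠ m := fun h => hi (h ▸ hmA)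
    have hjm : j ≠ m := fun h => hj (h ▸ hmA)
    have hkm : k ≠ m := fun h => hk (h ▸ hmA)
    set B := A.erase m with hB
    have hBcard : B.card = L - 2 := by
      rw [hB, Finset.card_erase_of_mem hmA, hA]; omega
    have hiB : i ∉ B := fun h => hi (Finset.mem_of_mem_erase h)
    have hjB : j ∉ B := fun h => hj (Finset.mem_of_mem_erase h)
    have hkB : k ∉ B := fun h => hk (Finset.mem_of_mem_erase h)
    have hmB : m ∉ B := Finset.notMem_erase m A
    have hF := F4 B i j k m hBcard hiB hjB hkB hmB hij hik him hjk hjm hkm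
    have hins : insert m B = A := Finset.insert_erase hmA
    rw [hins] at hF
    have eij : (insert i (insert j A)).erase m = insert i (insert j B) := by
      rw [Finset.erase_insert_of_ne him, Finset.erase_insert_of_ne hjm]
    have eik : (insert i (insert k A)).erase m = insert i (insert k B) := by
      rw [Finset.erase_insert_of_ne him, Finset.erase_insert_of_ne hkm]
    have ejk : (insert j (insert k A)).erase m = insert j (insert k B) := by
      rw [Finset.erase_insert_of_ne hjm, Finset.erase_insert_of_ne hkm]
    rw [eij] at heq
    have h2 := hext_le _ cik m (Finset.mem_insert_of_mem (Finset.mem_insert_of_mem hmA))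
    rw [eik] at h2
    have h3 := hext_le _ cjk m (Finset.mem_insert_of_mem (Finset.mem_insert_of_mem hmA))
    rw [ejk] at h3
    unfold DoubleMin at hF
    have m1 := min_le_left (θ (insert i (insert j B)) + θ (insert k A))
      (min (θ (insert i (insert k B)) + θ (insert j A)) (θ (insert i A) + θ (insert j (insert k B))))
    rcases hF with ⟨e1', e2'⟩ | ⟨e1', e2'⟩ | ⟨e1', e2'⟩
    · left; linarith
    · right; linarith
    · left; linarith

theorem F4_extension_S3 {K L : ℕ}
    (θ : Finset (Fin K) → ℝ) (μ : Fin K → ℝ)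
    (hyp : L = 1 ∨ (2 ≤ L ∧ L ≤ K - 1 ∧
      ∀ (A : Finset (Fin K)) (i j k l : Fin K), A.card = L - 2 →
        i ∉ A → j ∉ A → k ∉ A → l ∉ A →
        i ≠ j → i ≠ k → i ≠ l → j ≠ k → j ≠ l → k ≠ l →
        DoubleMin (θ (insert i (insert j A)) + θ (insert k (insert l A)))
                  (θ (insert i (insert k A)) + θ (insert j (insert l A)))
                  (θ (insert i (insert l A)) + θ (insert j (insert k A)))))
    (hext_le : ∀ A : Finset (Fin K), A.card = L + 1 → ∀ i ∈ A, θ A ≤ θ (A.erase i) + μ i)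
    (hext_eq : ∀ A : Finset (Fin K), A.card = L + 1 → ∃ i ∈ A, θ A = θ (A.erase i) + μ i) :
    ∀ (A : Finset (Fin K)) (i j k : Fin K), A.card = L - 1 →
      i ∉ A → j ∉ A → k ∉ A → i ≠ j → i ≠ k → j ≠ k →
      DoubleMin (θ (insert i (insert j A)) + θ (insert k A))
                (θ (insert i (insert k A)) + θ (insert j A))
                (θ (insert j (insert k A)) + θ (insert i A)) := by
  intro A i j k hA hi hj hk hij hik hjk
  have h1 := key_lemma θ μ hyp hext_le hext_eq A i j k hA hi hj hk hij hik hjk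
  have h2 := key_lemma θ μ hyp hext_le hext_eq A i k j hA hi hk hj hik hij (Ne.symm hjk)
  rw [Finset.insert_comm k j A] at h2
  have h3 := key_lemma θ μ hyp hext_le hext_eq A j k i hA hj hk hi hjk (Ne.symm hij) (Ne.symm hik)
  rw [Finset.insert_comm j i A, Finset.insert_comm k i A] at h3
  exact dm_of _ _ _ h1 h2 h3
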